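/- Let f : R^n → R ∪ {+∞} be proper, lsc, σ-strongly convex (σ ≥ 0), A : R^n → R^m linear, b ∈ R^m, λ ∈ R^m, z ∈ R^n, ρ_t, τ_t > 0 with ρ_t = ρ τ_t, and M a symmetric matrix with M - ρ AᵀA positive semi-definite. Let z⁺ be a minimizer of ξ ↦ f(ξ) + ⟨λ, Aξ - b⟩ + ρ_t ⟨Az - b, Aξ⟩ + (τ_t/2)‖ξ - z‖_M². Then for every ξ with Aξ = b: f(z⁺) + ⟨λ, Az⁺ - b⟩ + (ρ_t/2)‖Az⁺ - b‖² - f(ξ) ≤ (τ_t/2)(‖ξ - z‖_P² - ‖ξ - z⁺‖_P²) - (τ_t/2)‖z⁺ - z‖_P² - (σ/2)‖ξ - z⁺‖² - (ρ_t/2)‖Az⁺ - b‖², where P = M - ρ AᵀA. -/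

import Mathlib

open RealInnerProductSpace

lemma quad_id {E : Type*} [NormedAddCommGroup E] [InnerProductSpace ℝ E]
    (M : E →ₗ[ℝ] E) (hM : ∀ x y, ⟪M x, y⟫ = ⟪x, M y⟫) (x y : E) (t : ℝ) :
    ⟪t • x + (1-t) • y, M (t • x + (1-t) • y)⟫
      = t * ⟪x, M x⟫ + (1-t) * ⟪y, M y⟫ - t * (1-t) * ⟪x - y, M (x - y)⟫ := by
  have h1 : ⟪y, M x⟫ = ⟪x, M y⟫ := by rw [real_inner_comm]; exact hM x y
  simp only [map_add, map_smul, map_sub, inner_add_left, inner_add_right,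
    inner_sub_left, inner_sub_right, real_inner_smul_left, real_inner_smul_right]
  ring_nf

lemma norm_id {E : Type*} [NormedAddCommGroup E] [InnerProductSpace ℝ E]
    (x y : E) (t : ℝ) :
    ‖t • x + (1-t) • y‖ ^ 2
      = t * ‖x‖ ^ 2 + (1-t) * ‖y‖ ^ 2 - t * (1-t) * ‖x - y‖ ^ 2 := by
  have := quad_id (LinearMap.id : E →ₗ[ℝ] E) (fun a b => rfl) x y t
  simpa [real_inner_self_eq_norm_sq] using this

/-- Lemma 5.2: the Proximal Linearized Augmented Lagrangian primal map is nice,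
with `δ = 1` and `P = Q = M - ρ AᵀA ⪰ 0` (here `‖x‖_P² = ⟪x, M x⟫ - ρ‖A x‖²`). -/
theorem proximal_linearized_AL_is_nice (n m : ℕ)
    (f : EuclideanSpace ℝ (Fin n) → ℝ) (σ : ℝ) (hσ : 0 ≤ σ)
    (hflsc : LowerSemicontinuous f)
    (hfsc : ConvexOn ℝ Set.univ (fun x => f x - σ / 2 * ‖x‖ ^ 2))
    (A : EuclideanSpace ℝ (Fin n) →ₗ[ℝ] EuclideanSpace ℝ (Fin m))
    (b lam : EuclideanSpace ℝ (Fin m))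
    (z zplus : EuclideanSpace ℝ (Fin n))
    (ρ ρt τt : ℝ) (hρ : 0 < ρ) (hτt : 0 < τt) (hρt : ρt = ρ * τt)
    (M : EuclideanSpace ℝ (Fin n) →ₗ[ℝ] EuclideanSpace ℝ (Fin n))
    (hMsym : ∀ x y, ⟪M x, y⟫ = ⟪x, M y⟫)
    (hPpsd : ∀ x, 0 ≤ ⟪x, M x⟫ - ρ * ‖A x‖ ^ 2)
    (hmin : ∀ ξ,
      f zplus + ⟪lam, A zplus - b⟫ + ρt * ⟪A z - b, A zplus⟫
          + (τt / 2) * ⟪zplus - z, M (zplus - z)⟫ ≤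
        f ξ + ⟪lam, A ξ - b⟫ + ρt * ⟪A z - b, A ξ⟫
          + (τt / 2) * ⟪ξ - z, M (ξ - z)⟫) :
    ∀ ξ, A ξ = b →
      f zplus + ⟪lam, A zplus - b⟫ + (ρt / 2) * ‖A zplus - b‖ ^ 2 - f ξ ≤
        (τt / 2) * ((⟪ξ - z, M (ξ - z)⟫ - ρ * ‖A (ξ - z)‖ ^ 2)
            - (⟪ξ - zplus, M (ξ - zplus)⟫ - ρ * ‖A (ξ - zplus)‖ ^ 2))
          - (τt / 2) * (⟪zplus - z, M (zplus - z)⟫ - ρ * ‖A (zplus - z)‖ ^ 2)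
          - (σ / 2) * ‖ξ - zplus‖ ^ 2
          - (ρt / 2) * ‖A zplus - b‖ ^ 2 := by
  -- Step 1: strong minimizer inequality
  have key : ∀ ξ,
      f zplus + ⟪lam, A zplus - b⟫ + ρt * ⟪A z - b, A zplus⟫
          + (τt / 2) * ⟪zplus - z, M (zplus - z)⟫
          + ((σ / 2) * ‖ξ - zplus‖ ^ 2 + (τt / 2) * ⟪ξ - zplus, M (ξ - zplus)⟫) ≤
        f ξ + ⟪lam, A ξ - b⟫ + ρt * ⟪A z - b, A ξ⟫
          + (τt / 2) * ⟪ξ - z, M (ξ - z)⟫ := by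
    intro ξ
    set C : ℝ := (σ / 2) * ‖ξ - zplus‖ ^ 2 + (τt / 2) * ⟪ξ - zplus, M (ξ - zplus)⟫ with hCdef
    have hqM : 0 ≤ ⟪ξ - zplus, M (ξ - zplus)⟫ := by
      have h1 := hPpsd (ξ - zplus)
      have h2 : (0:ℝ) ≤ ρ * ‖A (ξ - zplus)‖ ^ 2 := by positivity
      linarith
    have hC : 0 ≤ C := by
      have : (0:ℝ) ≤ (σ/2) * ‖ξ - zplus‖ ^ 2 := by positivity
      have : (0:ℝ) ≤ (τt/2) * ⟪ξ - zplus, M (ξ - zplus)⟫ := by positivity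
      positivity
    rw [show f zplus + ⟪lam, A zplus - b⟫ + ρt * ⟪A z - b, A zplus⟫
          + (τt / 2) * ⟪zplus - z, M (zplus - z)⟫ + C ≤
        f ξ + ⟪lam, A ξ - b⟫ + ρt * ⟪A z - b, A ξ⟫ + (τt / 2) * ⟪ξ - z, M (ξ - z)⟫
        ↔ C ≤ (f ξ + ⟪lam, A ξ - b⟫ + ρt * ⟪A z - b, A ξ⟫ + (τt / 2) * ⟪ξ - z, M (ξ - z)⟫)
          - (f zplus + ⟪lam, A zplus - b⟫ + ρt * ⟪A z - b, A zplus⟫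
          + (τt / 2) * ⟪zplus - z, M (zplus - z)⟫) from by constructor <;> intro <;> linarith]
    apply le_of_forall_pos_le_add
    intro ε hε
    set t : ℝ := min (1/2) (ε / (C + 1)) with htdef
    have ht0 : 0 < t := lt_min (by norm_num) (by positivity)
    have ht1 : t < 1 := lt_of_le_of_lt (min_le_left _ _) (by norm_num)
    have htC : t * C ≤ ε := by
      calc t * C ≤ (ε / (C + 1)) * C := by
            apply mul_le_mul_of_nonneg_right (min_le_right _ _) hC
        _ ≤ ε := by
            rw [div_mul_eq_mul_div, div_le_iff₀ (by linarith)]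
            nlinarith
    set w : EuclideanSpace ℝ (Fin n) := t • ξ + (1-t) • zplus with hwdef
    -- convexity of f - σ/2 ‖·‖²
    have hf := hfsc.2 (Set.mem_univ ξ) (Set.mem_univ zplus) ht0.le (by linarith : (0:ℝ) ≤ 1 - t)
      (by ring)
    simp only at hf
    have hq2 : σ/2 * ‖w‖ ^ 2
        = σ/2 * (t * ‖ξ‖ ^ 2 + (1-t) * ‖zplus‖ ^ 2 - t * (1-t) * ‖ξ - zplus‖ ^ 2) := by
      rw [hwdef, norm_id]
    have hwz : w - z = t • (ξ - z) + (1-t) • (zplus - z) := by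
      rw [hwdef]; module
    have hq1 : (τt/2) * ⟪w - z, M (w - z)⟫
        = (τt/2) * (t * ⟪ξ - z, M (ξ - z)⟫ + (1-t) * ⟪zplus - z, M (zplus - z)⟫
            - t * (1-t) * ⟪ξ - zplus, M (ξ - zplus)⟫) := by
      have hd : (ξ - z) - (zplus - z) = ξ - zplus := by abel
      rw [hwz, quad_id M hMsym, hd]
    have hAw : A w - b = t • (A ξ - b) + (1-t) • (A zplus - b) := by
      rw [hwdef, map_add, map_smul, map_smul]
      module
    have hl1 : ⟪lam, A w - b⟫ = t * ⟪lam, A ξ - b⟫ + (1-t) * ⟪lam, A zplus - b⟫ := by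
      rw [hAw, inner_add_right, real_inner_smul_right, real_inner_smul_right]
    have hAw2 : A w = t • A ξ + (1-t) • A zplus := by
      rw [hwdef, map_add, map_smul, map_smul]
    have hl2 : ρt * ⟪A z - b, A w⟫
        = ρt * (t * ⟪A z - b, A ξ⟫ + (1-t) * ⟪A z - b, A zplus⟫) := by
      rw [hAw2, inner_add_right, real_inner_smul_right, real_inner_smul_right]
    have hmw := hmin w
    rw [hl1, hl2, hq1] at hmw
    -- now combine: get t*(1-t)*C ≤ t * D
    have hstep : t * ((1-t) * C) ≤ t * ((f ξ + ⟪lam, A ξ - b⟫ + ρt * ⟪A z - b, A ξ⟫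
          + (τt / 2) * ⟪ξ - z, M (ξ - z)⟫)
        - (f zplus + ⟪lam, A zplus - b⟫ + ρt * ⟪A z - b, A zplus⟫
          + (τt / 2) * ⟪zplus - z, M (zplus - z)⟫)) := by
      simp only [smul_eq_mul] at hf
      rw [← hwdef] at hf
      rw [hCdef]
      linarith [hf, hq2, hmw]
    have hstep2 := le_of_mul_le_mul_left hstep ht0
    clear_value w
    clear_value t
    clear_value C
    linarith [hstep2, hC, htC]
  -- Step 2: plug in feasible ξ and use polarization
  intro ξ hξ
  have key' := key ξ
  rw [hξ, sub_self, inner_zero_right] at key'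
  set u := A z - b with hu
  set v := A zplus - b with hv
  have hib : ρ * τt * ⟪u, A zplus⟫ = ρ * τt * (⟪u, b⟫ + ⟪u, v⟫) := by
    rw [hv, inner_sub_right]; ring
  have e1 : ‖A (ξ - z)‖ = ‖u‖ := by
    rw [map_sub, hξ, hu, show b - A z = -(A z - b) from by abel, norm_neg]
  have e2 : ‖A (ξ - zplus)‖ = ‖v‖ := by
    rw [map_sub, hξ, hv, show b - A zplus = -(A zplus - b) from by abel, norm_neg]
  have e3 : ‖A (zplus - z)‖ = ‖v - u‖ := by
    rw [map_sub, hu, hv, show A zplus - b - (A z - b) = A zplus - A z from by abel]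
  have polar : ρ * τt / 2 * ‖v - u‖ ^ 2
      = ρ * τt / 2 * (‖v‖ ^ 2 - 2 * ⟪v, u⟫ + ‖u‖ ^ 2) := by
    rw [norm_sub_sq_real]
  have hcomm : ρ * τt * ⟪v, u⟫ = ρ * τt * ⟪u, v⟫ := by rw [real_inner_comm]
  rw [e1, e2, e3, hρt]
  rw [hρt] at key'
  linarith [key', hib, polar, hcomm]
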